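/- Define F₀ : ℤ → ℝ by F₀(n) = 1/(√(n log n)) for n ≥ 4 and F₀(n) = 0 for n ≤ 3, and for k ∈ ℤ set c_k(n) = F₀(n) - F₀(n-k). Then c_k ∈ ℓ²(ℤ) for every k ∈ ℤ, and ‖c_k‖₂² / log|k| → 0 as |k| → ∞. -/

import Mathlib

open Real Filter

lemma st8_log_ge_one {x : ℝ} (hx : 4 ≤ x) : 1 ≤ Real.log x := by
  have h2 : (0.6931471803:ℝ) < Real.log 2 := Real.log_two_gt_d9
  have h4 : Real.log 4 = 2 * Real.log 2 := by
    rw [show (4:ℝ) = 2^2 by norm_num, Real.log_pow]; push_cast; ring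
  have : 1 ≤ Real.log 4 := by rw [h4]; linarith
  exact this.trans (Real.log_le_log (by norm_num) hx)

noncomputable def st8g (x : ℝ) : ℝ := 1 / Real.sqrt (x * Real.log x)

lemma st8g_deriv {x : ℝ} (hx : 4 ≤ x) :
    HasDerivAt st8g (-((Real.log x + 1) / (2 * Real.sqrt (x * Real.log x)) /
      (x * Real.log x))) x := by
  have hx0 : (0:ℝ) < x := by linarith
  have hL : 1 ≤ Real.log x := st8_log_ge_one hx
  have hh : (0:ℝ) < x * Real.log x := by nlinarith
  have h1 : HasDerivAt (fun y : ℝ => y * Real.log y) (Real.log x + 1) x := by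
    have := (hasDerivAt_id x).mul (Real.hasDerivAt_log hx0.ne')
    refine this.congr_deriv ?_
    simp [hx0.ne']
  have h2 : HasDerivAt (fun y : ℝ => Real.sqrt (y * Real.log y))
      ((Real.log x + 1) / (2 * Real.sqrt (x * Real.log x))) x := h1.sqrt hh.ne'
  have h3 := h2.inv (by positivity : Real.sqrt (x * Real.log x) ≠ 0)
  have : st8g = fun y : ℝ => (Real.sqrt (y * Real.log y))⁻¹ := by
    funext y; simp [st8g, one_div]
  rw [this]
  refine h3.congr_deriv ?_
  rw [Real.sq_sqrt hh.le]
  field_simp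

lemma st8g_deriv_bound {x : ℝ} (hx : 4 ≤ x) :
    |(-((Real.log x + 1) / (2 * Real.sqrt (x * Real.log x)) / (x * Real.log x)))|
      ≤ 1 / (x * Real.sqrt x) := by
  have hx0 : (0:ℝ) < x := by linarith
  have hL : 1 ≤ Real.log x := st8_log_ge_one hx
  have hh : (0:ℝ) < x * Real.log x := by nlinarith
  have hs : Real.sqrt (x * Real.log x) = Real.sqrt x * Real.sqrt (Real.log x) :=
    Real.sqrt_mul hx0.le _
  have hsx : (2:ℝ) ≤ Real.sqrt x := by
    rw [show (2:ℝ) = Real.sqrt 4 by rw [show (4:ℝ) = 2^2 by norm_num, Real.sqrt_sq]; norm_num]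
    exact Real.sqrt_le_sqrt hx
  have hsL : (1:ℝ) ≤ Real.sqrt (Real.log x) := by
    rw [show (1:ℝ) = Real.sqrt 1 by simp]
    exact Real.sqrt_le_sqrt hL
  have hpos : (0:ℝ) < (Real.log x + 1) / (2 * Real.sqrt (x * Real.log x)) / (x * Real.log x) := by
    have : (0:ℝ) < Real.sqrt (x * Real.log x) := Real.sqrt_pos.2 hh
    positivity
  rw [abs_neg, abs_of_pos hpos]
  rw [div_div, div_le_div_iff₀ (by positivity) (by positivity)]
  rw [hs]
  have h1 : (0:ℝ) < Real.sqrt x := by linarith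
  have e1 : (Real.log x + 1) * (x * Real.sqrt x) ≤ 2*Real.log x * (x * Real.sqrt x) := by
    nlinarith [mul_pos hx0 h1]
  have e2 : 2*Real.log x*(x*Real.sqrt x) ≤ 2*(Real.sqrt x*Real.sqrt (Real.log x))*(x*Real.log x) := by
    nlinarith [mul_nonneg (mul_nonneg (mul_nonneg (by linarith : (0:ℝ) ≤ 2*Real.log x) hx0.le) h1.le)
      (by linarith : (0:ℝ) ≤ Real.sqrt (Real.log x) - 1)]
  linarith

lemma st8g_mvt {a b : ℝ} (ha : 4 ≤ a) (hab : a ≤ b) :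
    |st8g b - st8g a| ≤ (b - a) / (a * Real.sqrt a) := by
  have h := Convex.norm_image_sub_le_of_norm_hasDerivWithin_le
    (f := st8g)
    (f' := fun x => -((Real.log x + 1) / (2 * Real.sqrt (x * Real.log x)) / (x * Real.log x)))
    (s := Set.Icc a b) (C := 1 / (a * Real.sqrt a))
    (fun x hx => (st8g_deriv (ha.trans hx.1)).hasDerivWithinAt)
    (fun x hx => by
      have hx4 : 4 ≤ x := ha.trans hx.1
      have h1 := st8g_deriv_bound hx4
      have h2 : 1 / (x * Real.sqrt x) ≤ 1 / (a * Real.sqrt a) := by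
        apply one_div_le_one_div_of_le
        · have : (0:ℝ) < Real.sqrt a := Real.sqrt_pos.2 (by linarith)
          nlinarith
        · have h5 := Real.sqrt_le_sqrt hx.1
          have h0 : (0:ℝ) ≤ Real.sqrt a := Real.sqrt_nonneg a
          exact mul_le_mul hx.1 h5 h0 (by linarith)
      calc ‖-((Real.log x + 1) / (2 * Real.sqrt (x * Real.log x)) / (x * Real.log x))‖
          = |(-((Real.log x + 1) / (2 * Real.sqrt (x * Real.log x)) / (x * Real.log x)))| := rfl
        _ ≤ 1 / (x * Real.sqrt x) := h1
        _ ≤ 1 / (a * Real.sqrt a) := h2)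
    (convex_Icc a b)
    (Set.left_mem_Icc.2 hab) (Set.right_mem_Icc.2 hab)
  rw [Real.norm_eq_abs, Real.norm_eq_abs, abs_of_nonneg (by linarith : (0:ℝ) ≤ b - a)] at h
  calc |st8g b - st8g a| ≤ 1 / (a * Real.sqrt a) * (b - a) := h
    _ = (b - a) / (a * Real.sqrt a) := by ring

lemma st8_slope_ll {m : ℝ} (hm : 3 ≤ m) :
    1 / ((m+1) * Real.log (m+1)) ≤ Real.log (Real.log (m+1)) - Real.log (Real.log m) := by
  have key : ∀ x : ℝ, 3 ≤ x → HasDerivAt (fun y => Real.log (Real.log y)) ((Real.log x)⁻¹ * x⁻¹) x := by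
    intro x hx
    have hx0 : (0:ℝ) < x := by linarith
    have hlx : (1:ℝ) < Real.log x := by
      have := Real.log_le_log (by norm_num : (0:ℝ) < 3) hx
      have h3 : (1:ℝ) < Real.log 3 := by
        have := Real.exp_one_lt_d9
        rw [show (1:ℝ) = Real.log (Real.exp 1) by simp]
        exact Real.log_lt_log (Real.exp_pos 1) (by linarith)
      linarith
    exact (Real.hasDerivAt_log (by linarith)).comp x (Real.hasDerivAt_log hx0.ne')
  obtain ⟨ξ, hξ, heq⟩ := exists_hasDerivAt_eq_slope (fun y => Real.log (Real.log y))
    (fun x => (Real.log x)⁻¹ * x⁻¹) (by linarith : m < m + 1)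
    (fun x hx => ((key x (by exact hm.trans hx.1)).continuousAt).continuousWithinAt)
    (fun x hx => key x (by linarith [hx.1]))
  have hξ3 : 3 ≤ ξ := by linarith [hξ.1]
  have hξ0 : (0:ℝ) < ξ := by linarith
  have hlξ : (1:ℝ) < Real.log ξ := by
    have := Real.log_le_log (by norm_num : (0:ℝ) < 3) hξ3
    have h3 : (1:ℝ) < Real.log 3 := by
      have := Real.exp_one_lt_d9
      rw [show (1:ℝ) = Real.log (Real.exp 1) by simp]
      exact Real.log_lt_log (Real.exp_pos 1) (by linarith)
    linarith
  have hmono : ξ * Real.log ξ ≤ (m+1) * Real.log (m+1) := by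
    have h1 : Real.log ξ ≤ Real.log (m+1) := Real.log_le_log hξ0 (le_of_lt hξ.2)
    nlinarith [hξ.2, hξ0, hlξ]
  have h2 : 1 / ((m+1) * Real.log (m+1)) ≤ 1 / (ξ * Real.log ξ) :=
    one_div_le_one_div_of_le (by nlinarith) hmono
  have h3 : (Real.log ξ)⁻¹ * ξ⁻¹ = 1 / (ξ * Real.log ξ) := by
    field_simp
  rw [h3] at heq
  have : (Real.log (Real.log (m+1)) - Real.log (Real.log m)) / (m + 1 - m) = 1 / (ξ * Real.log ξ) := heq.symm
  simp at this
  linarith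

lemma st8_cube_step {x : ℝ} (hx : 2 ≤ x) : 1/x^3 ≤ 1/(x-1)^2 - 1/x^2 := by
  have h1 : (0:ℝ) < x - 1 := by linarith
  have h2 : (0:ℝ) < x := by linarith
  rw [div_sub_div _ _ (by positivity) (by positivity), div_le_div_iff₀ (by positivity) (by positivity)]
  nlinarith

lemma st8_head_sum : ∀ j : ℕ, ∑ n ∈ Finset.Icc (4:ℤ) (4+(j:ℤ)), 1/((n:ℝ) * Real.log n)
    ≤ 1 + Real.log (Real.log (4+(j:ℝ))) := by
  intro j
  induction j with
  | zero =>
    simp only [Nat.cast_zero, add_zero]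
    rw [show Finset.Icc (4:ℤ) 4 = {4} by rfl, Finset.sum_singleton]
    have h1 : (1:ℝ) ≤ Real.log 4 := st8_log_ge_one le_rfl
    have h2 : (0:ℝ) ≤ Real.log (Real.log 4) := Real.log_nonneg h1
    have : ((4:ℤ):ℝ) = (4:ℝ) := by norm_num
    rw [this]
    have : 1/((4:ℝ) * Real.log 4) ≤ 1 := by
      rw [div_le_one (by nlinarith)]; nlinarith
    linarith
  | succ j ih =>
    have hins : Finset.Icc (4:ℤ) (4+((j:ℤ)+1)) = insert (4+(j:ℤ)+1) (Finset.Icc (4:ℤ) (4+(j:ℤ))) := by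
      ext x; simp only [Finset.mem_Icc, Finset.mem_insert]; omega
    push_cast
    rw [hins, Finset.sum_insert (by simp [Finset.mem_Icc])]
    have hstep := st8_slope_ll (m := 4 + (j:ℝ)) (by
      have := Nat.cast_nonneg (α := ℝ) j; linarith)
    have hc : ((4+(j:ℤ)+1 : ℤ):ℝ) = 4 + (j:ℝ) + 1 := by push_cast; ring
    rw [hc]
    have : (4:ℝ) + (j:ℝ) + 1 = (4 + (j:ℝ)) + 1 := by ring
    rw [this]
    push_cast at ih
    rw [show (4:ℝ) + ((j:ℝ)+1) = 4 + (j:ℝ) + 1 from by ring]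
    linarith

lemma st8_tail_sum (N : ℤ) (hN : 2 ≤ N) : ∀ j : ℕ,
    ∑ n ∈ Finset.Icc N (N+(j:ℤ)), 1/((n:ℝ))^3 ≤ 1/((N:ℝ)-1)^2 - 1/((N:ℝ)+(j:ℝ))^2 := by
  intro j
  induction j with
  | zero =>
    simp only [Nat.cast_zero, add_zero]
    rw [show Finset.Icc N N = {N} by simp, Finset.sum_singleton]
    exact st8_cube_step (by exact_mod_cast hN)
  | succ j ih =>
    have hins : Finset.Icc N (N+((j:ℤ)+1)) = insert (N+(j:ℤ)+1) (Finset.Icc N (N+(j:ℤ))) := by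
      ext x; simp only [Finset.mem_Icc, Finset.mem_insert]; omega
    push_cast
    rw [hins, Finset.sum_insert (by simp [Finset.mem_Icc])]
    have hstep := st8_cube_step (x := (N:ℝ) + (j:ℝ) + 1) (by
      have h9 : (2:ℝ) ≤ (N:ℝ) := by exact_mod_cast hN
      have := Nat.cast_nonneg (α := ℝ) j; linarith)
    have hc : ((N+(j:ℤ)+1 : ℤ):ℝ) = (N:ℝ) + (j:ℝ) + 1 := by push_cast; ring
    rw [hc]
    push_cast at ih
    have : (N:ℝ) + (j:ℝ) + 1 - 1 = (N:ℝ) + (j:ℝ) := by ring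
    rw [this] at hstep
    rw [show (N:ℝ) + ((j:ℝ)+1) = (N:ℝ) + (j:ℝ) + 1 from by ring]
    linarith

lemma st8_tail_pt {K n : ℤ} (hK : 1 ≤ K) (hn : 2*K+4 ≤ n) :
    (st8g ((n:ℤ):ℝ) - st8g (((n:ℤ):ℝ) - ((K:ℤ):ℝ)))^2 ≤ 8*((K:ℤ):ℝ)^2/((n:ℤ):ℝ)^3 := by
  have hK' : (1:ℝ) ≤ (K:ℝ) := by exact_mod_cast hK
  have hn' : 2*(K:ℝ) + 4 ≤ (n:ℝ) := by exact_mod_cast hn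
  set a : ℝ := (n:ℝ) - (K:ℝ) with ha
  have ha4 : 4 ≤ a := by rw [ha]; linarith
  have hab : a ≤ (n:ℝ) := by rw [ha]; linarith
  have h := st8g_mvt ha4 hab
  have hba : (n:ℝ) - a = (K:ℝ) := by rw [ha]; ring
  rw [hba] at h
  clear_value a
  have ha0 : (0:ℝ) < a := by linarith
  have hsq : (st8g (n:ℝ) - st8g a)^2 ≤ ((K:ℝ) / (a * Real.sqrt a))^2 := by
    rw [← sq_abs]
    exact pow_le_pow_left₀ (abs_nonneg _) h 2
  have h2 : ((K:ℝ)/(a*Real.sqrt a))^2 = (K:ℝ)^2 / a^3 := by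
    rw [div_pow, mul_pow, Real.sq_sqrt ha0.le]
    ring
  have hn0 : (0:ℝ) < (n:ℝ) := by linarith
  have h3 : (K:ℝ)^2/a^3 ≤ 8*(K:ℝ)^2/(n:ℝ)^3 := by
    rw [div_le_div_iff₀ (by positivity) (by positivity : (0:ℝ) < (n:ℝ)^3)]
    have h4 : (n:ℝ)/2 ≤ a := by rw [ha]; linarith
    have h5 : ((n:ℝ)/2)^3 ≤ a^3 := pow_le_pow_left₀ (by linarith) h4 3
    have h6 := mul_le_mul_of_nonneg_left h5 (sq_nonneg (K:ℝ))
    nlinarith [h6]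
  calc (st8g (n:ℝ) - st8g a)^2 ≤ ((K:ℝ)/(a*Real.sqrt a))^2 := hsq
    _ = (K:ℝ)^2/a^3 := h2
    _ ≤ 8*(K:ℝ)^2/(n:ℝ)^3 := h3

lemma st8_main (F : ℤ → ℝ)
    (hF : ∀ n : ℤ, F n = if 4 ≤ n then 1 / Real.sqrt ((n : ℝ) * Real.log (n : ℝ)) else 0)
    (K : ℤ) (hK : 1 ≤ K) :
    Summable (fun n : ℤ => (F n - F (n - K))^2) ∧
      ∑' n : ℤ, (F n - F (n - K))^2 ≤ 4 * Real.log (Real.log (2*(K:ℝ)+3)) + 6 := by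
  classical
  set q : ℤ → ℝ := fun n => (F n - F (n - K))^2 with hqdef
  set ψ : ℤ → ℝ := fun m => if 4 ≤ m then 1/((m:ℝ) * Real.log (m:ℝ)) else 0 with hψdef
  have hF4 : ∀ n : ℤ, 4 ≤ n → F n = st8g (n:ℝ) := by
    intro n h; rw [hF, if_pos h]; rfl
  have hF3 : ∀ n : ℤ, n ≤ 3 → F n = 0 := by
    intro n h; rw [hF, if_neg (by omega)]
  have hq0 : ∀ n : ℤ, n ≤ 3 → q n = 0 := by
    intro n h
    simp only [hqdef, hF3 n h, hF3 (n - K) (by omega), sub_zero]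
    norm_num
  have hqt : ∀ n : ℤ, 2*K+4 ≤ n → q n ≤ 8*((K:ℤ):ℝ)^2/((n:ℤ):ℝ)^3 := by
    intro n h
    have h1 : F n = st8g (n:ℝ) := hF4 n (by omega)
    have h2 : F (n - K) = st8g ((n:ℝ) - (K:ℝ)) := by
      rw [hF4 (n-K) (by omega)]; push_cast; ring_nf
    simp only [hqdef, h1, h2]
    exact st8_tail_pt hK h
  have hψnn : ∀ m : ℤ, 0 ≤ ψ m := by
    intro m; simp only [hψdef]
    split
    · rename_i h
      have h4 : (4:ℝ) ≤ (m:ℝ) := by exact_mod_cast h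
      have := st8_log_ge_one h4
      positivity
    · exact le_rfl
  have hψeq : ∀ m : ℤ, (F m)^2 = ψ m := by
    intro m
    rw [hF]
    simp only [hψdef]
    split
    · rename_i h
      have h4 : (4:ℝ) ≤ (m:ℝ) := by exact_mod_cast h
      have hnn : (0:ℝ) ≤ (m:ℝ) * Real.log (m:ℝ) := by
        have := st8_log_ge_one h4; nlinarith
      rw [div_pow, one_pow, Real.sq_sqrt hnn]
    · norm_num
  set v : ℤ → ℝ := fun n => if n ≤ 2*K+3 then q n else 0 with hvdef
  set w : ℤ → ℝ := fun n => if n ≤ 2*K+3 then 0 else 8*((K:ℤ):ℝ)^2/((n:ℤ):ℝ)^3 with hwdef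
  have hvz : ∀ n : ℤ, n ∉ Finset.Icc (4:ℤ) (2*K+3) → v n = 0 := by
    intro n hn
    simp only [Finset.mem_Icc, not_and_or, not_le] at hn
    by_cases h : n ≤ 2*K+3
    · simp only [hvdef, if_pos h]
      exact hq0 n (by omega)
    · simp only [hvdef, if_neg h]
  have hv : Summable v := summable_of_ne_finset_zero hvz
  have hw : Summable w := by
    apply Summable.of_nat_of_neg
    · apply Summable.of_nonneg_of_le (g := fun n : ℕ => w (n:ℤ))
        (f := fun n : ℕ => 8*((K:ℤ):ℝ)^2 * (1/(n:ℝ)^3))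
      · intro n
        by_cases h : (n:ℤ) ≤ 2*K+3
        · simp only [hwdef, if_pos h]; exact le_rfl
        · simp only [hwdef, if_neg h]
          positivity
      · intro n
        by_cases h : (n:ℤ) ≤ 2*K+3
        · simp only [hwdef, if_pos h]
          positivity
        · simp only [hwdef, if_neg h]
          rw [mul_one_div]
          push_cast
          exact le_rfl
      · exact (summable_one_div_nat_pow.2 (by norm_num)).mul_left _
    · have hz : ∀ n : ℕ, w (-(n:ℤ)) = 0 := by
        intro n
        simp only [hwdef, if_pos (by omega : -(n:ℤ) ≤ 2*K+3)]
      exact summable_zero.congr (fun n => (hz n).symm)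
  have hqle : ∀ n : ℤ, q n ≤ v n + w n := by
    intro n
    by_cases h : n ≤ 2*K+3
    · simp only [hvdef, hwdef, if_pos h, add_zero]; exact le_rfl
    · simp only [hvdef, hwdef, if_neg h, zero_add]
      exact hqt n (by omega)
  have hqs : Summable q :=
    Summable.of_nonneg_of_le (fun n => sq_nonneg _) hqle (hv.add hw)
  refine ⟨hqs, ?_⟩
  -- tsum bound
  have ht1 : ∑' n, q n ≤ (∑' n, v n) + (∑' n, w n) := by
    calc ∑' n, q n ≤ ∑' n, (v n + w n) := Summable.tsum_le_tsum hqle hqs (hv.add hw)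
      _ = (∑' n, v n) + (∑' n, w n) := Summable.tsum_add hv hw
  -- head
  set A : ℝ := ∑ n ∈ Finset.Icc (4:ℤ) (2*K+3), ψ n with hAdef
  have htv : ∑' n, v n ≤ 4 * A := by
    rw [tsum_eq_sum hvz]
    have step1 : ∀ n ∈ Finset.Icc (4:ℤ) (2*K+3), v n ≤ 2 * ψ n + 2 * ψ (n - K) := by
      intro n hn
      rw [Finset.mem_Icc] at hn
      have : v n = q n := if_pos hn.2
      rw [this, ← hψeq, ← hψeq]
      simp only [hqdef]
      nlinarith [sq_nonneg (F n + F (n - K))]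
    calc ∑ n ∈ Finset.Icc (4:ℤ) (2*K+3), v n
        ≤ ∑ n ∈ Finset.Icc (4:ℤ) (2*K+3), (2 * ψ n + 2 * ψ (n - K)) :=
          Finset.sum_le_sum step1
      _ = 2 * A + 2 * ∑ n ∈ Finset.Icc (4:ℤ) (2*K+3), ψ (n - K) := by
          rw [Finset.sum_add_distrib, ← Finset.mul_sum, ← Finset.mul_sum]
      _ ≤ 2 * A + 2 * A := by
          have e1 : ∑ n ∈ Finset.Icc (4:ℤ) (2*K+3), ψ (n - K)
              = ∑ m ∈ Finset.Icc (4-K) (K+3), ψ m := by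
            have hmap : Finset.Icc (4:ℤ) (2*K+3)
                = Finset.map (addRightEmbedding K) (Finset.Icc (4-K) (K+3)) := by
              rw [Finset.map_add_right_Icc]
              congr 1 <;> ring
            rw [hmap, Finset.sum_map]
            apply Finset.sum_congr rfl
            intro m _
            have he : (addRightEmbedding K) m - K = m := by
              simp [addRightEmbedding]
            rw [he]
          have e2 : ∑ m ∈ Finset.Icc (4-K:ℤ) (K+3), ψ m
              ≤ ∑ m ∈ Finset.Icc (4-K:ℤ) (2*K+3), ψ m :=
            Finset.sum_le_sum_of_subset_of_nonneg
              (Finset.Icc_subset_Icc_right (by omega))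
              (fun i _ _ => hψnn i)
          have e3 : ∑ m ∈ Finset.Icc (4-K:ℤ) (2*K+3), ψ m = A := by
            rw [hAdef]
            refine (Finset.sum_subset (Finset.Icc_subset_Icc_left (by omega)) ?_).symm
            intro x hx hnx
            rw [Finset.mem_Icc] at hx
            simp only [Finset.mem_Icc, not_and_or, not_le] at hnx
            simp only [hψdef]
            rw [if_neg (by omega)]
          linarith [e2, e3, e1.le, e1.ge]
      _ = 4 * A := by ring
  have hA : A ≤ 1 + Real.log (Real.log (2*(K:ℝ)+3)) := by
    set j : ℕ := (2*K-1).toNat with hjdef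
    have hj : ((j:ℤ)) = 2*K-1 := Int.toNat_of_nonneg (by omega)
    have hjr : ((j:ℕ):ℝ) = 2*(K:ℝ)-1 := by
      have h0 : ((j:ℤ):ℝ) = ((2*K-1:ℤ):ℝ) := by rw [hj]
      push_cast at h0
      linarith
    have := st8_head_sum j
    rw [hjr] at this
    have hIcc : (4:ℤ) + (j:ℤ) = 2*K+3 := by omega
    rw [hIcc] at this
    have hAeq : A = ∑ n ∈ Finset.Icc (4:ℤ) (2*K+3), 1/((n:ℝ) * Real.log (n:ℝ)) := by
      rw [hAdef]
      apply Finset.sum_congr rfl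
      intro n hn
      rw [Finset.mem_Icc] at hn
      simp only [hψdef]
      rw [if_pos hn.1]
    rw [hAeq]
    calc ∑ n ∈ Finset.Icc (4:ℤ) (2*K+3), 1/((n:ℝ) * Real.log (n:ℝ))
        ≤ 1 + Real.log (Real.log (4 + (2*(K:ℝ)-1))) := this
      _ = 1 + Real.log (Real.log (2*(K:ℝ)+3)) := by ring_nf
  -- tail
  have htw : ∑' n, w n ≤ 2 := by
    apply Summable.tsum_le_of_sum_le hw
    intro s
    set t := s.filter (fun n => 2*K+4 ≤ n) with htdef
    have hts : ∑ n ∈ s, w n = ∑ n ∈ t, w n := by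
      refine (Finset.sum_filter_of_ne ?_).symm
      intro x _ hne
      by_contra hcon
      exact hne (by simp only [hwdef, if_pos (by omega : x ≤ 2*K+3)])
    rw [hts]
    rcases Finset.eq_empty_or_nonempty t with hte | hte
    · rw [hte]; simp
    · set B := t.max' hte with hBdef
      have hBK : 2*K+4 ≤ B := (Finset.mem_filter.1 (t.max'_mem hte)).2
      have hsub : t ⊆ Finset.Icc (2*K+4) B := by
        intro x hx
        rw [Finset.mem_Icc]
        exact ⟨(Finset.mem_filter.1 hx).2, Finset.le_max' t x hx⟩
      have hwnn : ∀ i : ℤ, 0 ≤ w i := by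
        intro i
        simp only [hwdef]
        split
        · exact le_rfl
        · rename_i h
          have : (0:ℝ) ≤ ((i:ℤ):ℝ) := by exact_mod_cast (by omega : (0:ℤ) ≤ i)
          positivity
      have step1 : ∑ n ∈ t, w n ≤ ∑ n ∈ Finset.Icc (2*K+4) B, w n :=
        Finset.sum_le_sum_of_subset_of_nonneg hsub (fun i _ _ => hwnn i)
      have step2 : ∑ n ∈ Finset.Icc (2*K+4) B, w n
          = 8*((K:ℤ):ℝ)^2 * ∑ n ∈ Finset.Icc (2*K+4) B, 1/((n:ℤ):ℝ)^3 := by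
        rw [Finset.mul_sum]
        apply Finset.sum_congr rfl
        intro n hn
        rw [Finset.mem_Icc] at hn
        simp only [hwdef]
        rw [if_neg (by omega), mul_one_div]
      have step3 : ∑ n ∈ Finset.Icc (2*K+4) B, 1/((n:ℤ):ℝ)^3 ≤ 1/(2*(K:ℝ)+3)^2 := by
        set jj : ℕ := (B - (2*K+4)).toNat with hjj
        have hj2 : (2*K+4) + (jj:ℤ) = B := by omega
        have := st8_tail_sum (2*K+4) (by omega) jj
        rw [hj2] at this
        have hc1 : ((2*K+4:ℤ):ℝ) - 1 = 2*(K:ℝ)+3 := by push_cast; ring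
        rw [hc1] at this
        have hpos : (0:ℝ) ≤ 1/(((2*K+4:ℤ):ℝ)+(jj:ℝ))^2 := by positivity
        linarith
      have step4 : 8*((K:ℤ):ℝ)^2 * (1/(2*(K:ℝ)+3)^2) ≤ 2 := by
        rw [mul_one_div, div_le_iff₀ (by positivity)]
        have hK' : (1:ℝ) ≤ (K:ℝ) := by exact_mod_cast hK
        nlinarith
      calc ∑ n ∈ t, w n ≤ 8*((K:ℤ):ℝ)^2 * ∑ n ∈ Finset.Icc (2*K+4) B, 1/((n:ℤ):ℝ)^3 := by
            rw [← step2]; exact step1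
        _ ≤ 8*((K:ℤ):ℝ)^2 * (1/(2*(K:ℝ)+3)^2) := by
            apply mul_le_mul_of_nonneg_left step3 (by positivity)
        _ ≤ 2 := step4
  linarith [ht1, htv, hA, htw]

lemma st8_psi_tendsto :
    Tendsto (fun x : ℝ => (4*Real.log (Real.log (2*x+3)) + 6)/Real.log x) atTop (nhds 0) := by
  have T2 : Tendsto (fun x : ℝ => Real.log (Real.log x)/Real.log x) atTop (nhds 0) :=
    (Real.isLittleO_log_id_atTop.tendsto_div_nhds_zero).comp Real.tendsto_log_atTop
  have T1 : ∀ C : ℝ, Tendsto (fun x : ℝ => C/Real.log x) atTop (nhds 0) := fun C =>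
    tendsto_const_nhds.div_atTop Real.tendsto_log_atTop
  have Tψ2 : Tendsto (fun x : ℝ => (4*(Real.log 2 + Real.log (Real.log x)) + 6)/Real.log x)
      atTop (nhds 0) := by
    have heq : (fun x : ℝ => (4*(Real.log 2 + Real.log (Real.log x)) + 6)/Real.log x)
        = fun x : ℝ => (4*Real.log 2 + 6)/Real.log x
          + 4*(Real.log (Real.log x)/Real.log x) := by
      funext x; ring
    rw [heq]
    have := (T1 (4*Real.log 2 + 6)).add (T2.const_mul 4)
    simpa using this
  apply squeeze_zero'
  · filter_upwards [eventually_ge_atTop (16:ℝ)] with x hx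
    have hlx : (1:ℝ) ≤ Real.log x := st8_log_ge_one (by linarith)
    have hl2 : (1:ℝ) ≤ Real.log (2*x+3) := st8_log_ge_one (by linarith)
    have : (0:ℝ) ≤ Real.log (Real.log (2*x+3)) := Real.log_nonneg hl2
    positivity
  · filter_upwards [eventually_ge_atTop (16:ℝ)] with x hx
    have hlx : (1:ℝ) ≤ Real.log x := st8_log_ge_one (by linarith)
    have hl2 : (1:ℝ) ≤ Real.log (2*x+3) := st8_log_ge_one (by linarith)
    have hnum : Real.log (Real.log (2*x+3)) ≤ Real.log 2 + Real.log (Real.log x) := by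
      have h1 : Real.log (2*x+3) ≤ 2 * Real.log x := by
        have hsq : 2*x+3 ≤ x^2 := by nlinarith
        calc Real.log (2*x+3) ≤ Real.log (x^2) := Real.log_le_log (by linarith) hsq
          _ = 2 * Real.log x := by
              rw [Real.log_pow]; push_cast; ring
      have h2 : Real.log (Real.log (2*x+3)) ≤ Real.log (2 * Real.log x) :=
        Real.log_le_log (by linarith) h1
      rw [Real.log_mul (by norm_num) (by linarith)] at h2
      exact h2
    show (4*Real.log (Real.log (2*x+3)) + 6)/Real.log x
        ≤ (4*(Real.log 2 + Real.log (Real.log x)) + 6)/Real.log x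
    exact (div_le_div_iff_of_pos_right (by linarith)).2 (by linarith)
  · exact Tψ2

theorem stmt8 (F : ℤ → ℝ)
    (hF : ∀ n : ℤ, F n = if 4 ≤ n then 1 / Real.sqrt ((n : ℝ) * Real.log (n : ℝ)) else 0)
    (c : ℤ → ℤ → ℝ) (hc : ∀ k n, c k n = F n - F (n - k)) :
    (∀ k : ℤ, Summable (fun n : ℤ => (c k n) ^ 2)) ∧
      Filter.Tendsto (fun k : ℤ => (∑' n : ℤ, (c k n) ^ 2) / Real.log |(k : ℝ)|)
        Filter.cofinite (nhds 0) := by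
  have hsum : ∀ k : ℤ, Summable (fun n : ℤ => (c k n) ^ 2) := by
    intro k
    rcases lt_trichotomy k 0 with hk | hk | hk
    · -- k < 0
      have h := (st8_main F hF (-k) (by omega)).1
      have h2 : Summable ((fun n : ℤ => (c k n)^2) ∘ (Equiv.addRight k)) := by
        apply h.congr
        intro n
        simp only [Function.comp, Equiv.coe_addRight, hc]
        ring_nf
      exact (Equiv.summable_iff (Equiv.addRight k)).1 h2
    · subst hk
      have : (fun n : ℤ => (c 0 n)^2) = fun _ => (0:ℝ) := by
        funext n; rw [hc]; simp
      rw [this]; exact summable_zero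
    · exact ((st8_main F hF k (by omega)).1).congr (fun n => by rw [hc])
  refine ⟨hsum, ?_⟩
  have hsymm : ∀ k : ℤ, k < 0 → ∑' n : ℤ, (c k n)^2 = ∑' n : ℤ, (c (-k) n)^2 := by
    intro k hk
    have key : ∀ n : ℤ, (c k n)^2 = ((fun n : ℤ => (c (-k) n)^2) ((Equiv.addRight (-k)) n)) := by
      intro n
      simp only [Equiv.coe_addRight, hc]
      have : n + -k - -k = n := by ring
      rw [this]
      ring_nf
    calc ∑' n : ℤ, (c k n)^2
        = ∑' n : ℤ, ((fun n : ℤ => (c (-k) n)^2) ((Equiv.addRight (-k)) n)) := by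
          exact tsum_congr key
      _ = ∑' n : ℤ, (c (-k) n)^2 := Equiv.tsum_eq (Equiv.addRight (-k)) (fun n : ℤ => (c (-k) n)^2)
  have hSB : ∀ k : ℤ, 4 ≤ |k| →
      (∑' n : ℤ, (c k n)^2) ≤ 4 * Real.log (Real.log (2*|(k:ℝ)|+3)) + 6 := by
    intro k hk4
    have habs : |(k:ℝ)| = ((|k| : ℤ) : ℝ) := by push_cast; rfl
    rcases le_or_gt 0 k with hk | hk
    · have hk4' : 4 ≤ k := by rwa [abs_of_nonneg hk] at hk4
      have h := (st8_main F hF k (by omega)).2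
      have he : (∑' n : ℤ, (c k n)^2) = ∑' n : ℤ, (F n - F (n - k))^2 :=
        tsum_congr (fun n => by rw [hc])
      rw [he, habs, show |k| = k from abs_of_nonneg hk]
      exact h
    · have h := (st8_main F hF (-k) (by omega)).2
      have he : (∑' n : ℤ, (c (-k) n)^2) = ∑' n : ℤ, (F n - F (n - -k))^2 :=
        tsum_congr (fun n => by rw [hc])
      rw [hsymm k hk, he, habs, show |k| = -k from abs_of_neg hk]
      push_cast
      push_cast at h
      exact h
  have hS0 : ∀ k : ℤ, 0 ≤ ∑' n : ℤ, (c k n)^2 :=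
    fun k => tsum_nonneg (fun n => sq_nonneg _)
  have hev : ∀ᶠ k : ℤ in cofinite, 4 ≤ |k| := by
    rw [Filter.eventually_cofinite]
    apply Set.Finite.subset (Set.finite_Icc (-3:ℤ) 3)
    intro k hk
    simp only [Set.mem_setOf_eq, not_le] at hk
    rw [abs_lt] at hk
    simp only [Set.mem_Icc]
    omega
  have habs' : ∀ k : ℤ, 4 ≤ |k| → (4:ℝ) ≤ |(k:ℝ)| := by
    intro k h
    have : ((4:ℤ):ℝ) ≤ ((|k|:ℤ):ℝ) := by exact_mod_cast h
    push_cast at this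
    simpa using this
  apply squeeze_zero' (g := fun k : ℤ => (4 * Real.log (Real.log (2*|(k:ℝ)|+3)) + 6) / Real.log |(k:ℝ)|)
  · filter_upwards [hev] with k hk
    have h4 := habs' k hk
    have hl : (1:ℝ) ≤ Real.log |(k:ℝ)| := st8_log_ge_one h4
    exact div_nonneg (hS0 k) (by linarith)
  · filter_upwards [hev] with k hk
    have h4 := habs' k hk
    have hl : (1:ℝ) ≤ Real.log |(k:ℝ)| := st8_log_ge_one h4
    exact (div_le_div_iff_of_pos_right (by linarith)).2 (hSB k hk)
  · have habs : Tendsto (fun k : ℤ => |(k:ℝ)|) cofinite atTop := by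
      have h1 : Tendsto (fun k : ℤ => |k|) cofinite atTop := by
        rw [Int.cofinite_eq]
        exact Filter.tendsto_sup.2 ⟨tendsto_abs_atBot_atTop, tendsto_abs_atTop_atTop⟩
      have h2 : Tendsto (fun m : ℤ => (m:ℝ)) atTop atTop := tendsto_intCast_atTop_atTop
      have h3 := h2.comp h1
      apply h3.congr
      intro k
      simp [Function.comp]
    exact st8_psi_tendsto.comp habs
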